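/- arXiv:1411.5262 — 4 statements merged into one kernel-verified Lean document; each statement's English description precedes it below -/
import Mathlib

section
/- If w(z) satisfies z(1−z)w'' + (2b+1 − (a+b+1)z)w' − abw = 0 and y(x) is defined by w(4x/(1+x)²) = (1+x)^{2a} y(x), then y satisfies x(1−x²)y'' + (2b+1 + 2x − (4a−2b+1)x²)y' + 2a(1 + 2(b−a)x)y = 0. -/
open scoped Nat

/-- Pochhammer symbol (rising factorial). -/
noncomputable def poch (a : ℝ) (n : ℕ) : ℝ := (ascPochhammer ℝ n).eval a

/-- Gauss hypergeometric series ₂F₁(a,b;c;z). -/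
noncomputable def F (a b c z : ℝ) : ℝ :=
  ∑' n : ℕ, poch a n * poch b n / (poch c n * (n ! : ℝ)) * z ^ n

theorem ode_transform_c_eq_2b_add_one (a b : ℝ) (w y : ℝ → ℝ)
    (hw : ∀ z : ℝ, |z| < 1 → DifferentiableAt ℝ w z ∧ DifferentiableAt ℝ (deriv w) z)
    (hy : ∀ x : ℝ, |x| < 1 → DifferentiableAt ℝ y x ∧ DifferentiableAt ℝ (deriv y) x)
    (hode : ∀ z : ℝ, |z| < 1 →
      z * (1 - z) * deriv (deriv w) z + (2 * b + 1 - (a + b + 1) * z) * deriv w z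
        - a * b * w z = 0)
    (hrel : ∀ x : ℝ, |x| < 1 → w (4 * x / (1 + x) ^ 2) = (1 + x) ^ (2 * a) * y x) :
    ∀ x : ℝ, |x| < 1 → |4 * x / (1 + x) ^ 2| < 1 →
      x * (1 - x ^ 2) * deriv (deriv y) x
        + (2 * b + 1 + 2 * x - (4 * a - 2 * b + 1) * x ^ 2) * deriv y x
        + 2 * a * (1 + 2 * (b - a) * x) * y x = 0 := by
  have key1 : ∀ t : ℝ, |t| < 1 → |4 * t / (1 + t) ^ 2| < 1 →
      deriv w (4 * t / (1 + t) ^ 2) * (4 * (1 - t) / (1 + t) ^ 3)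
        = 2 * a * (1 + t) ^ (2 * a - 1) * y t + (1 + t) ^ (2 * a) * deriv y t := by
    intro t ht hgt
    have ht0 : (0:ℝ) < 1 + t := by cases' abs_lt.mp ht with h1 h2; linarith
    have htne : (1:ℝ) + t ≠ 0 := ne_of_gt ht0
    have hid : HasDerivAt (fun u : ℝ => 1 + u) 1 t := by
      simpa using (hasDerivAt_id t).const_add (1:ℝ)
    have hgd : HasDerivAt (fun u : ℝ => 4 * u / (1 + u) ^ 2) (4 * (1 - t) / (1 + t) ^ 3) t := by
      have hnum : HasDerivAt (fun u : ℝ => 4 * u) 4 t := by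
        simpa using (hasDerivAt_id t).const_mul (4:ℝ)
      have hden : HasDerivAt (fun u : ℝ => (1 + u) ^ 2) (2 * (1 + t)) t := by
        simpa using hid.fun_pow 2
      have hd := hnum.fun_div hden (pow_ne_zero 2 htne)
      refine hd.congr_deriv ?_
      field_simp
      ring
    have hcomp : HasDerivAt (fun u : ℝ => w (4 * u / (1 + u) ^ 2))
        (deriv w (4 * t / (1 + t) ^ 2) * (4 * (1 - t) / (1 + t) ^ 3)) t := by
      simpa [Function.comp_def] using ((hw _ hgt).1.hasDerivAt.comp t hgd)
    have hP : HasDerivAt (fun u : ℝ => (1 + u) ^ (2 * a)) (2 * a * (1 + t) ^ (2 * a - 1)) t := by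
      simpa [Function.comp_def] using (Real.hasDerivAt_rpow_const (x := 1 + t) (p := 2 * a) (Or.inl htne)).comp t hid
    have hrhs : HasDerivAt (fun u : ℝ => (1 + u) ^ (2 * a) * y u)
        (2 * a * (1 + t) ^ (2 * a - 1) * y t + (1 + t) ^ (2 * a) * deriv y t) t := by
      have := hP.fun_mul (hy t ht).1.hasDerivAt
      convert this using 1
    have hev : (fun u : ℝ => w (4 * u / (1 + u) ^ 2)) =ᶠ[nhds t]
        (fun u : ℝ => (1 + u) ^ (2 * a) * y u) := by
      have h1 : ∀ᶠ u in nhds t, |u| < 1 :=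
        Filter.Tendsto.eventually_lt_const ht continuous_abs.continuousAt
      exact h1.mono fun u hu => hrel u hu
    exact (hcomp.congr_of_eventuallyEq hev.symm).unique hrhs
  intro x hx hz
  have hs0 : (0:ℝ) < 1 + x := by cases' abs_lt.mp hx with h1 h2; linarith
  have hsne : (1:ℝ) + x ≠ 0 := ne_of_gt hs0
  have hid : HasDerivAt (fun u : ℝ => 1 + u) 1 x := by
    simpa using (hasDerivAt_id x).const_add (1:ℝ)
  have hgd : HasDerivAt (fun u : ℝ => 4 * u / (1 + u) ^ 2) (4 * (1 - x) / (1 + x) ^ 3) x := by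
    have hnum : HasDerivAt (fun u : ℝ => 4 * u) 4 x := by
      simpa using (hasDerivAt_id x).const_mul (4:ℝ)
    have hden : HasDerivAt (fun u : ℝ => (1 + u) ^ 2) (2 * (1 + x)) x := by
      simpa using hid.fun_pow 2
    have hd := hnum.fun_div hden (pow_ne_zero 2 hsne)
    refine hd.congr_deriv ?_
    field_simp
    ring
  have hud : HasDerivAt (fun u : ℝ => 4 * (1 - u) / (1 + u) ^ 3) (8 * (x - 2) / (1 + x) ^ 4) x := by
    have hnum : HasDerivAt (fun u : ℝ => 4 * (1 - u)) (-4) x := by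
      have h : HasDerivAt (fun u : ℝ => 1 - u) (-1) x := by
        simpa using (hasDerivAt_id x).const_sub (1:ℝ)
      simpa using h.const_mul (4:ℝ)
    have hden : HasDerivAt (fun u : ℝ => (1 + u) ^ 3) (3 * (1 + x) ^ 2) x := by
      simpa using hid.fun_pow 3
    have hd := hnum.fun_div hden (pow_ne_zero 3 hsne)
    refine hd.congr_deriv ?_
    field_simp
    ring
  have hwcomp : HasDerivAt (fun u : ℝ => deriv w (4 * u / (1 + u) ^ 2))
      (deriv (deriv w) (4 * x / (1 + x) ^ 2) * (4 * (1 - x) / (1 + x) ^ 3)) x := by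
    simpa [Function.comp_def] using ((hw _ hz).2.hasDerivAt.comp x hgd)
  have hL := hwcomp.mul hud
  have hQd : HasDerivAt (fun u : ℝ => (1 + u) ^ (2 * a - 1))
      ((2 * a - 1) * (1 + x) ^ (2 * a - 2)) x := by
    have h := (Real.hasDerivAt_rpow_const (x := 1 + x) (p := 2 * a - 1) (Or.inl hsne)).comp x hid
    have h2 : 2 * a - 1 - 1 = 2 * a - 2 := by ring
    simpa [h2, Function.comp_def] using h
  have hPd : HasDerivAt (fun u : ℝ => (1 + u) ^ (2 * a)) (2 * a * (1 + x) ^ (2 * a - 1)) x := by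
    simpa [Function.comp_def] using (Real.hasDerivAt_rpow_const (x := 1 + x) (p := 2 * a) (Or.inl hsne)).comp x hid
  have hRd := ((hQd.const_mul (2 * a)).mul (hy x hx).1.hasDerivAt).add
    (hPd.mul (hy x hx).2.hasDerivAt)
  have hU : ∀ᶠ u in nhds x, |u| < 1 ∧ |4 * u / (1 + u) ^ 2| < 1 := by
    have h1 : ∀ᶠ u in nhds x, |u| < 1 :=
      Filter.Tendsto.eventually_lt_const hx continuous_abs.continuousAt
    have hca : ContinuousAt (fun u : ℝ => |4 * u / (1 + u) ^ 2|) x := by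
      apply ContinuousAt.abs
      exact (continuousAt_const.mul continuousAt_id).div
        ((continuousAt_const.add continuousAt_id).pow 2) (pow_ne_zero 2 hsne)
    have h2 : ∀ᶠ u in nhds x, |4 * u / (1 + u) ^ 2| < 1 :=
      Filter.Tendsto.eventually_lt_const hz hca
    exact h1.and h2
  have heq : (fun u : ℝ => deriv w (4 * u / (1 + u) ^ 2) * (4 * (1 - u) / (1 + u) ^ 3))
      =ᶠ[nhds x] fun u : ℝ => 2 * a * (1 + u) ^ (2 * a - 1) * y u + (1 + u) ^ (2 * a) * deriv y u :=
    hU.mono fun u hu => key1 u hu.1 hu.2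
  have e2raw := (hL.congr_of_eventuallyEq heq.symm).unique hRd
  have e1raw := key1 x hx hz
  have e3raw := hode (4 * x / (1 + x) ^ 2) hz
  rw [hrel x hx] at e3raw
  have hPQ : (1 + x) ^ (2 * a) = (1 + x) ^ (2 * a - 1) * (1 + x) := by
    rw [← Real.rpow_add_one hsne (2 * a - 1)]; congr 1; ring
  have hQR : (1 + x) ^ (2 * a - 1) = (1 + x) ^ (2 * a - 2) * (1 + x) := by
    rw [← Real.rpow_add_one hsne (2 * a - 2)]; congr 1; ring
  rw [hPQ, hQR] at e1raw e2raw e3raw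
  have hRne : (1 + x) ^ (2 * a - 2) ≠ 0 := (Real.rpow_pos_of_pos hs0 _).ne'
  have key : (1 + x) ^ (2 * a - 2) * ((1 + x) ^ 11 * 4) *
      (x * (1 - x ^ 2) * deriv (deriv y) x
        + (2 * b + 1 + 2 * x - (4 * a - 2 * b + 1) * x ^ 2) * deriv y x
        + 2 * a * (1 + 2 * (b - a) * x) * y x) = 0 := by
    generalize (1 + x) ^ (2 * a - 2) = R at e1raw e2raw e3raw ⊢
    field_simp at e1raw e2raw e3raw
    linear_combination (-(4 * x * (1 - x) * (1 + x) ^ 4)) * e2raw + (16 * (1 - x) * (1 + x) ^ 4) * e3raw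
      - ((1 + x) ^ 6 * (4 * ((2 * b + 1) + 2 * (1 - 2 * a) * x + (2 * b - 1) * x ^ 2))) * e1raw
  have hpos : (0:ℝ) < (1 + x) ^ (2 * a - 2) * ((1 + x) ^ 11 * 4) :=
    mul_pos (Real.rpow_pos_of_pos hs0 _) (by positivity)
  exact (mul_eq_zero.mp key).resolve_left (ne_of_gt hpos)
end

section
/- Let a, b be parameters with 2b+1 not zero or a negative integer. Define c₀ = 1, c₁ = −2a/(2b+1), and for n ≥ 2, cₙ = [ (n+2(a−1))(n+2(a−b−1)) c_{n−2} − 2(n+a−1) c_{n−1} ] / (n(n+2b)). Then for all n ≥ 0, c_{2n} = (a)_n (a−b+1/2)_n / (n! (b+1/2)_n) and c_{2n+1} = c₁ · (a+1)_n (a−b+1/2)_n / (n! (b+3/2)_n). -/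
open scoped Nat

lemma poch_zero (x : ℝ) : poch x 0 = 1 := by simp [poch]

lemma poch_succ (x : ℝ) (n : ℕ) : poch x (n+1) = poch x n * (x + n) := by
  simp [poch, ascPochhammer_succ_eval]

lemma poch_succ' (x : ℝ) (n : ℕ) : poch x (n+1) = x * poch (x+1) n := by
  simp [poch, ascPochhammer_succ_left, Polynomial.eval_comp]

lemma poch_ne (x : ℝ) (h : ∀ k : ℕ, x + (k:ℝ) ≠ 0) (n : ℕ) : poch x n ≠ 0 := by
  induction n with
  | zero => simp [poch_zero]
  | succ n ih => rw [poch_succ]; exact mul_ne_zero ih (h n)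

set_option maxHeartbeats 1600000 in
theorem frobenius_coeffs_lambda_zero (a b : ℝ) (hb : ∀ k : ℕ, 2 * b + 1 + (k : ℝ) ≠ 0)
    (c : ℕ → ℝ) (hc0 : c 0 = 1) (hc1 : c 1 = -2 * a / (2 * b + 1))
    (hrec : ∀ n : ℕ, 2 ≤ n → c n =
      (((n : ℝ) + 2 * (a - 1)) * ((n : ℝ) + 2 * (a - b - 1)) * c (n - 2)
        - 2 * ((n : ℝ) + a - 1) * c (n - 1)) / ((n : ℝ) * ((n : ℝ) + 2 * b))) :
    ∀ n : ℕ,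
      c (2 * n) = poch a n * poch (a - b + 1/2) n / ((n ! : ℝ) * poch (b + 1/2) n) ∧
      c (2 * n + 1) =
        c 1 * (poch (a + 1) n * poch (a - b + 1/2) n / ((n ! : ℝ) * poch (b + 3/2) n)) := by
  have h2b1 : (2*b+1 : ℝ) ≠ 0 := by simpa using hb 0
  have hb12 : (b + 1/2 : ℝ) ≠ 0 := fun h => h2b1 (by linarith)
  have hD : ∀ m : ℕ, poch (b+1/2) m ≠ 0 := by
    refine poch_ne _ fun k h => hb (2*k) ?_
    push_cast; linarith
  have hE : ∀ m : ℕ, poch (b+3/2) m ≠ 0 := by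
    refine poch_ne _ fun k h => hb (2*k+2) ?_
    push_cast; linarith
  have key : ∀ n : ℕ, c (2*n) = poch a n * poch (a-b+1/2) n / ((n ! :ℝ) * poch (b+1/2) n) ∧
      c (2*n+1) = -(poch a (n+1) * poch (a-b+1/2) n) / ((n ! :ℝ) * poch (b+1/2) (n+1)) := by
    intro n
    induction n with
    | zero =>
      refine ⟨by simp [poch_zero, hc0], ?_⟩
      rw [hc1]
      have p1 : poch a 1 = a := by rw [poch_succ a 0, poch_zero]; push_cast; ring
      have p2 : poch (b+1/2) 1 = b+1/2 := by rw [poch_succ _ 0, poch_zero]; push_cast; ring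
      rw [p1, p2, poch_zero, Nat.factorial_zero, Nat.cast_one, mul_one, one_mul]
      rw [div_eq_div_iff h2b1 hb12]
      ring
    | succ n ih =>
      obtain ⟨ih0, ih1⟩ := ih
      have hfac : ((n)! : ℝ) ≠ 0 := by exact_mod_cast Nat.factorial_ne_zero n
      have hfacs : (((n+1))! : ℝ) ≠ 0 := by exact_mod_cast Nat.factorial_ne_zero (n+1)
      have hDn := hD n
      have hDn1 := hD (n+1)
      have hDn2 := hD (n+1+1)
      have hn2 : (2*(n:ℝ) + 2) ≠ 0 := by positivity
      have hn3 : (2*(n:ℝ) + 3) ≠ 0 := by positivity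
      have hd2 : (2*(n:ℝ) + 2 + 2*b) ≠ 0 := fun h => hb (2*n+1) (by push_cast; linarith)
      have hd3 : (2*(n:ℝ) + 3 + 2*b) ≠ 0 := fun h => hb (2*n+2) (by push_cast; linarith)
      -- division-free versions of the hypotheses
      have ih0' : c (2*n) * ((n ! : ℝ) * poch (b+1/2) n)
          = poch a n * poch (a-b+1/2) n := (eq_div_iff (mul_ne_zero hfac hDn)).mp ih0
      have ih1' : c (2*n+1) * ((n ! : ℝ) * poch (b+1/2) (n+1))
          = -(poch a (n+1) * poch (a-b+1/2) n) := (eq_div_iff (mul_ne_zero hfac hDn1)).mp ih1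
      rw [poch_succ a n, poch_succ (b+1/2) n] at ih1'
      have h := hrec (2*n+2) (by omega)
      rw [show 2*n+2-2 = 2*n from by omega, show 2*n+2-1 = 2*n+1 from by omega] at h
      push_cast at h
      have hm := (eq_div_iff (mul_ne_zero hn2 hd2)).mp h
      have e2 : c (2*(n+1)) = poch a (n+1) * poch (a-b+1/2) (n+1) /
          (((n+1)! :ℝ) * poch (b+1/2) (n+1)) := by
        rw [show 2*(n+1) = 2*n+2 from by omega, eq_div_iff (mul_ne_zero hfacs hDn1)]
        rw [poch_succ a n, poch_succ (a-b+1/2) n, poch_succ (b+1/2) n, Nat.factorial_succ]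
        push_cast
        refine mul_right_cancel₀ (mul_ne_zero hn2 hd2) ?_
        linear_combination
          (((n:ℝ)+1) * ((n)! : ℝ) * poch (b+1/2) n * (b+1/2+(n:ℝ))) * hm
          + (((n:ℝ)+1) * (b+1/2+(n:ℝ)) *
              ((2*(n:ℝ)+2+2*(a-1)) * (2*(n:ℝ)+2+2*(a-b-1)))) * ih0'
          + (-(((n:ℝ)+1) * (2*(2*(n:ℝ)+2+a-1)))) * ih1'
      refine ⟨e2, ?_⟩
      have e2' := (eq_div_iff (mul_ne_zero hfacs hDn1)).mp e2
      rw [poch_succ a n, poch_succ (a-b+1/2) n, poch_succ (b+1/2) n, Nat.factorial_succ] at e2'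
      push_cast at e2'
      have h' := hrec (2*n+3) (by omega)
      rw [show 2*n+3-2 = 2*n+1 from by omega, show 2*n+3-1 = 2*(n+1) from by omega] at h'
      push_cast at h'
      have hm3 := (eq_div_iff (mul_ne_zero hn3 hd3)).mp h'
      rw [show 2*(n+1)+1 = 2*n+3 from by omega, eq_div_iff (mul_ne_zero hfacs hDn2)]
      rw [poch_succ (b+1/2) (n+1), poch_succ (b+1/2) n, poch_succ a (n+1), poch_succ a n,
        poch_succ (a-b+1/2) n, Nat.factorial_succ]
      push_cast
      refine mul_right_cancel₀ (mul_ne_zero hn3 hd3) ?_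
      linear_combination
        (((n:ℝ)+1) * ((n)! : ℝ) * poch (b+1/2) n * (b+1/2+(n:ℝ)) * (b+1/2+(n:ℝ)+1)) * hm3
        + (((n:ℝ)+1) * (b+1/2+(n:ℝ)+1) *
            ((2*(n:ℝ)+3+2*(a-1)) * (2*(n:ℝ)+3+2*(a-b-1)))) * ih1'
        + (-(2*(2*(n:ℝ)+3+a-1)) * (b+1/2+(n:ℝ)+1)) * e2'
  intro n
  obtain ⟨h0, h1⟩ := key n
  refine ⟨h0, ?_⟩
  rw [h1, hc1, poch_succ' a n, poch_succ' (b+1/2) n]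
  have h32 : b + 1/2 + 1 = b + 3/2 := by ring
  rw [h32]
  have hfac : ((n)! : ℝ) ≠ 0 := by exact_mod_cast Nat.factorial_ne_zero n
  have hEn := hE n
  field_simp
end

section
/- If w(z) satisfies z(1−z)w'' + (2b−1 − (a+b+1)z)w' − abw = 0 and y(x) is defined by w(4x/(1+x)²) = (1+x)^{2a} y(x), then y satisfies x(1−x²)y'' + (2b−1 − 2x − (4a−2b+3)x²)y' − 2a(1 + 2(a−b+1)x)y = 0. -/
open scoped Nat

lemma hasDerivAt_g (t : ℝ) (hu : 0 < 1 + t) :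
    HasDerivAt (fun s : ℝ => 4 * s / (1 + s) ^ 2) (4 * (1 - t) / (1 + t) ^ 3) t := by
  have hnum : HasDerivAt (fun s : ℝ => 4 * s) 4 t := by
    simpa using (hasDerivAt_id t).const_mul 4
  have hden : HasDerivAt (fun s : ℝ => (1 + s) ^ 2) (2 * (1 + t)) t := by
    have : HasDerivAt (fun s : ℝ => (1 + s) ^ 2) _ t := ((hasDerivAt_id t).const_add 1).pow 2
    convert this using 1; simp [id_eq]
  have h : HasDerivAt (fun s : ℝ => 4 * s / (1 + s) ^ 2) _ t := hnum.div hden (by positivity)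
  convert h using 1
  field_simp
  ring

lemma hasDerivAt_G1 (t : ℝ) (hu : 0 < 1 + t) :
    HasDerivAt (fun s : ℝ => 4 * (1 - s) / (1 + s) ^ 3) (8 * (t - 2) / (1 + t) ^ 4) t := by
  have hnum : HasDerivAt (fun s : ℝ => 4 * (1 - s)) (-4) t := by
    simpa using ((hasDerivAt_const t (1 : ℝ)).sub (hasDerivAt_id t)).const_mul 4
  have hden : HasDerivAt (fun s : ℝ => (1 + s) ^ 3) (3 * (1 + t) ^ 2) t := by
    have : HasDerivAt (fun s : ℝ => (1 + s) ^ 3) _ t := ((hasDerivAt_id t).const_add 1).pow 3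
    convert this using 1; simp [id_eq]
  have h : HasDerivAt (fun s : ℝ => 4 * (1 - s) / (1 + s) ^ 3) _ t := hnum.div hden (by positivity)
  convert h using 1
  field_simp
  ring

lemma hasDerivAt_h (p t : ℝ) (hu : 0 < 1 + t) :
    HasDerivAt (fun s : ℝ => (1 + s) ^ p) (p * (1 + t) ^ (p - 1)) t := by
  have hadd : HasDerivAt (fun s : ℝ => 1 + s) 1 t := by
    simpa using (hasDerivAt_id t).const_add 1
  have := (Real.hasDerivAt_rpow_const (x := 1 + t) (p := p) (Or.inl hu.ne')).comp t hadd
  have h2 : HasDerivAt (fun s : ℝ => (1 + s) ^ p) _ t := this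
  simpa using h2

theorem ode_transform_c_eq_2b_sub_one (a b : ℝ) (w y : ℝ → ℝ)
    (hw : ∀ z : ℝ, |z| < 1 → DifferentiableAt ℝ w z ∧ DifferentiableAt ℝ (deriv w) z)
    (hy : ∀ x : ℝ, |x| < 1 → DifferentiableAt ℝ y x ∧ DifferentiableAt ℝ (deriv y) x)
    (hode : ∀ z : ℝ, |z| < 1 →
      z * (1 - z) * deriv (deriv w) z + (2 * b - 1 - (a + b + 1) * z) * deriv w z
        - a * b * w z = 0)
    (hrel : ∀ x : ℝ, |x| < 1 → w (4 * x / (1 + x) ^ 2) = (1 + x) ^ (2 * a) * y x) :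
    ∀ x : ℝ, |x| < 1 → |4 * x / (1 + x) ^ 2| < 1 →
      x * (1 - x ^ 2) * deriv (deriv y) x
        + (2 * b - 1 - 2 * x - (4 * a - 2 * b + 3) * x ^ 2) * deriv y x
        - 2 * a * (1 + 2 * (a - b + 1) * x) * y x = 0 := by
  have hopen1 : IsOpen {t : ℝ | |t| < 1} := isOpen_lt continuous_abs continuous_const
  -- key identity: first derivative relation on the good set
  have key : ∀ t : ℝ, |t| < 1 → |4 * t / (1 + t) ^ 2| < 1 →
      deriv w (4 * t / (1 + t) ^ 2) * (4 * (1 - t) / (1 + t) ^ 3)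
        = 2 * a * (1 + t) ^ (2 * a - 1) * y t + (1 + t) ^ (2 * a) * deriv y t := by
    intro t ht hgt
    have hu : 0 < 1 + t := by have := abs_lt.mp ht; linarith [this.1]
    have hgd := hasDerivAt_g t hu
    have hWg : HasDerivAt (fun s : ℝ => w (4 * s / (1 + s) ^ 2))
        (deriv w (4 * t / (1 + t) ^ 2) * (4 * (1 - t) / (1 + t) ^ 3)) t :=
      ((hw _ hgt).1.hasDerivAt).comp t hgd
    have hhy : HasDerivAt (fun s : ℝ => (1 + s) ^ (2 * a) * y s)
        (2 * a * (1 + t) ^ (2 * a - 1) * y t + (1 + t) ^ (2 * a) * deriv y t) t := by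
      have hh := hasDerivAt_h (2 * a) t hu
      have := hh.mul (hy t ht).1.hasDerivAt
      exact this
    have heq : (fun s : ℝ => w (4 * s / (1 + s) ^ 2))
        =ᶠ[nhds t] (fun s : ℝ => (1 + s) ^ (2 * a) * y s) :=
      Filter.eventually_of_mem (hopen1.mem_nhds ht) (fun s hs => hrel s hs)
    exact (hWg.congr_of_eventuallyEq heq.symm).unique hhy
  intro x hx hz
  have hu : 0 < 1 + x := by have := abs_lt.mp hx; linarith [this.1]
  have hx1 : (1 : ℝ) - x ≠ 0 := by have := abs_lt.mp hx; intro h; linarith [this.2]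
  have hgd := hasDerivAt_g x hu
  -- eventual versions of the hypotheses
  have hev1 : ∀ᶠ t in nhds x, |t| < 1 := Filter.eventually_of_mem (hopen1.mem_nhds hx) (fun s hs => hs)
  have hev2 : ∀ᶠ t in nhds x, |4 * t / (1 + t) ^ 2| < 1 := by
    have hc : ContinuousAt (fun t : ℝ => |4 * t / (1 + t) ^ 2|) x :=
      continuous_abs.continuousAt.comp hgd.differentiableAt.continuousAt
    exact hc.tendsto.eventually_lt_const hz
  have hev : (fun t : ℝ => deriv w (4 * t / (1 + t) ^ 2) * (4 * (1 - t) / (1 + t) ^ 3))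
      =ᶠ[nhds x] (fun t : ℝ => 2 * a * (1 + t) ^ (2 * a - 1) * y t + (1 + t) ^ (2 * a) * deriv y t) := by
    filter_upwards [hev1, hev2] with t ht hgt
    exact key t ht hgt
  -- second derivative relation
  have hL : HasDerivAt (fun t : ℝ => deriv w (4 * t / (1 + t) ^ 2) * (4 * (1 - t) / (1 + t) ^ 3))
      ((deriv (deriv w) (4 * x / (1 + x) ^ 2) * (4 * (1 - x) / (1 + x) ^ 3)) * (4 * (1 - x) / (1 + x) ^ 3)
        + deriv w (4 * x / (1 + x) ^ 2) * (8 * (x - 2) / (1 + x) ^ 4)) x :=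
    (HasDerivAt.comp (h₂ := deriv w) x ((hw _ hz).2.hasDerivAt) hgd : HasDerivAt (fun t => deriv w (4 * t / (1 + t) ^ 2)) _ x).mul (hasDerivAt_G1 x hu)
  have hR : HasDerivAt (fun t : ℝ => 2 * a * (1 + t) ^ (2 * a - 1) * y t + (1 + t) ^ (2 * a) * deriv y t)
      ((2 * a * ((2 * a - 1) * (1 + x) ^ (2 * a - 1 - 1)) * y x
          + 2 * a * (1 + x) ^ (2 * a - 1) * deriv y x)
        + ((2 * a * (1 + x) ^ (2 * a - 1)) * deriv y x
          + (1 + x) ^ (2 * a) * deriv (deriv y) x)) x := by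
    have hh := hasDerivAt_h (2 * a) x hu
    have hh1 : HasDerivAt (fun t : ℝ => 2 * a * (1 + t) ^ (2 * a - 1))
        (2 * a * ((2 * a - 1) * (1 + x) ^ (2 * a - 1 - 1))) x :=
      (hasDerivAt_h (2 * a - 1) x hu).const_mul (2 * a)
    have h1 := hh1.mul (hy x hx).1.hasDerivAt
    have h2 := hh.mul (hy x hx).2.hasDerivAt
    exact h1.add h2
  have E2 : (deriv (deriv w) (4 * x / (1 + x) ^ 2) * (4 * (1 - x) / (1 + x) ^ 3)) * (4 * (1 - x) / (1 + x) ^ 3)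
        + deriv w (4 * x / (1 + x) ^ 2) * (8 * (x - 2) / (1 + x) ^ 4)
      = (2 * a * ((2 * a - 1) * (1 + x) ^ (2 * a - 1 - 1)) * y x
          + 2 * a * (1 + x) ^ (2 * a - 1) * deriv y x)
        + ((2 * a * (1 + x) ^ (2 * a - 1)) * deriv y x
          + (1 + x) ^ (2 * a) * deriv (deriv y) x) := by
    have := hev.deriv_eq
    rw [hL.deriv, hR.deriv] at this
    exact this
  have E1 := key x hx hz
  have E3 := hode (4 * x / (1 + x) ^ 2) hz
  rw [hrel x hx] at E3
  have hHpos : 0 < (1 + x) ^ (2 * a) := Real.rpow_pos_of_pos hu _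
  have hH1 : (1 + x) ^ (2 * a - 1) = (1 + x) ^ (2 * a) / (1 + x) := by
    rw [eq_div_iff hu.ne', ← Real.rpow_add_one hu.ne']
    ring_nf
  have hH2 : (1 + x) ^ (2 * a - 1 - 1) = (1 + x) ^ (2 * a) / (1 + x) ^ 2 := by
    rw [eq_div_iff (pow_ne_zero 2 hu.ne'),
      show ((1 + x) : ℝ) ^ 2 = (1 + x) * (1 + x) by ring, ← mul_assoc,
      ← Real.rpow_add_one hu.ne', ← Real.rpow_add_one hu.ne']
    ring_nf
  have hG1ne : 4 * (1 - x) / (1 + x) ^ 3 ≠ 0 := by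
    apply div_ne_zero
    · intro h; apply hx1; linarith
    · positivity
  rw [hH1] at E1
  rw [hH1, hH2] at E2
  have hW1 : deriv w (4 * x / (1 + x) ^ 2)
      = (2 * a * ((1 + x) ^ (2 * a) / (1 + x)) * y x + (1 + x) ^ (2 * a) * deriv y x)
        / (4 * (1 - x) / (1 + x) ^ 3) := (eq_div_iff hG1ne).mpr E1
  have e2 : deriv (deriv w) (4 * x / (1 + x) ^ 2) * (4 * (1 - x) / (1 + x) ^ 3 * (4 * (1 - x) / (1 + x) ^ 3))
      = (2 * a * ((2 * a - 1) * ((1 + x) ^ (2 * a) / (1 + x) ^ 2)) * y x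
          + 2 * a * ((1 + x) ^ (2 * a) / (1 + x)) * deriv y x
        + (2 * a * ((1 + x) ^ (2 * a) / (1 + x)) * deriv y x
          + (1 + x) ^ (2 * a) * deriv (deriv y) x))
        - deriv w (4 * x / (1 + x) ^ 2) * (8 * (x - 2) / (1 + x) ^ 4) := by
    linear_combination E2
  have hW2 := (eq_div_iff (mul_ne_zero hG1ne hG1ne)).mpr e2
  rw [hW1] at hW2
  have hune : (1 + x) ≠ 0 := hu.ne'
  have hmain : (1 + x) ^ (2 * a) *
      ((1 + x) * (x * (1 - x ^ 2) * deriv (deriv y) x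
        + (2 * b - 1 - 2 * x - (4 * a - 2 * b + 3) * x ^ 2) * deriv y x
        - 2 * a * (1 + 2 * (a - b + 1) * x) * y x))
      = 4 * (1 - x) *
        (4 * x / (1 + x) ^ 2 * (1 - 4 * x / (1 + x) ^ 2) * deriv (deriv w) (4 * x / (1 + x) ^ 2)
          + (2 * b - 1 - (a + b + 1) * (4 * x / (1 + x) ^ 2)) * deriv w (4 * x / (1 + x) ^ 2)
          - a * b * ((1 + x) ^ (2 * a) * y x)) := by
    rw [hW2, hW1]
    field_simp
    ring
  rw [E3, mul_zero] at hmain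
  rcases mul_eq_zero.mp hmain with h | h
  · exact absurd h hHpos.ne'
  · rcases mul_eq_zero.mp h with h' | h'
    · exact absurd h' hune
    · exact h'
end

section
/- For |x| < 1 and parameters a, b with 2b−1 not zero or a negative integer, the function y₁(x) = ₂F₁(a, a−b+3/2; b−1/2; x²) + (2ax/(2b−1)) ₂F₁(a+1, a−b+3/2; b+1/2; x²) satisfies x(1−x²)y'' + (2b−1 − 2x − (4a−2b+3)x²)y' − 2a(1 + 2(a−b+1)x)y = 0. -/
open scoped Nat

/-- The first Frobenius solution in the second contiguous case. -/
noncomputable def y₁ (a b : ℝ) (t : ℝ) : ℝ :=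
  F a (a - b + 3/2) (b - 1/2) (t ^ 2)
    + (2 * a * t / (2 * b - 1)) * F (a + 1) (a - b + 3/2) (b + 1/2) (t ^ 2)

namespace Y1Aux

open Filter Topology

lemma poch_zero (x : ℝ) : poch x 0 = 1 := by simp [poch]

lemma poch_succ (x : ℝ) (n : ℕ) : poch x (n+1) = poch x n * (x + n) := by
  simp [poch, ascPochhammer_succ_right]

lemma poch_shift (x : ℝ) (n : ℕ) : x * poch (x+1) n = poch x n * (x + n) := by
  induction n with
  | zero => simp [poch_zero]
  | succ n ih =>
    rw [poch_succ, poch_succ, ← mul_assoc, ih]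
    push_cast; ring

lemma poch_succ_left (x : ℝ) (n : ℕ) : poch x (n+1) = x * poch (x+1) n := by
  rw [poch_succ, ← poch_shift]

lemma poch_ne_zero {x : ℝ} (h : ∀ k : ℕ, x + k ≠ 0) (n : ℕ) : poch x n ≠ 0 := by
  induction n with
  | zero => simp [poch_zero]
  | succ n ih => rw [poch_succ]; exact mul_ne_zero ih (h n)

noncomputable def rr (a b : ℝ) (n : ℕ) : ℝ :=
  if Even n then ((n:ℝ) + 2*a)/((n:ℝ) + 2*b - 1) else ((n:ℝ) + 2*a - 2*b + 2)/((n:ℝ) + 1)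

noncomputable def cc (a b : ℝ) : ℕ → ℝ
  | 0 => 1
  | (n+1) => rr a b n * cc a b n

lemma cc_succ (a b : ℝ) (n : ℕ) : cc a b (n+1) = rr a b n * cc a b n := rfl

lemma rr_even (a b : ℝ) (n : ℕ) (hn : n % 2 = 0) :
    rr a b n = ((n:ℝ) + 2*a)/((n:ℝ) + 2*b - 1) := by
  rw [rr, if_pos (Nat.even_iff.mpr hn)]

lemma rr_odd (a b : ℝ) (n : ℕ) (hn : n % 2 = 1) :
    rr a b n = ((n:ℝ) + 2*a - 2*b + 2)/((n:ℝ) + 1) := by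
  rw [rr, if_neg (by rw [Nat.even_iff]; omega)]

/-- shift operator on coefficient sequences -/
def sh (d : ℕ → ℝ) : ℕ → ℝ := fun n => match n with | 0 => 0 | (m+1) => d m

noncomputable def c1 (a b : ℝ) (n : ℕ) : ℝ := ((n:ℝ)+1) * cc a b (n+1)
noncomputable def c2 (a b : ℝ) (n : ℕ) : ℝ := ((n:ℝ)+1) * c1 a b (n+1)

/-- eventual linear ratio bound -/
lemma lin_ratio (u v q : ℝ) (hq : 1 < q) :
    ∀ᶠ n : ℕ in atTop, |(n:ℝ) + u| ≤ q * |(n:ℝ) + v| := by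
  obtain ⟨N, hN⟩ := exists_nat_ge (max (|v|) ((|u| + q*|v|)/(q-1)))
  filter_upwards [eventually_ge_atTop N] with n hn
  have hn' : max (|v|) ((|u| + q*|v|)/(q-1)) ≤ (n:ℝ) := hN.trans (Nat.cast_le.mpr hn)
  have h1 : |v| ≤ (n:ℝ) := (le_max_left _ _).trans hn'
  have h2 : (|u| + q*|v|)/(q-1) ≤ (n:ℝ) := (le_max_right _ _).trans hn'
  have h2' : |u| + q*|v| ≤ (q-1) * n := by
    rw [div_le_iff₀ (by linarith)] at h2; linarith
  have e1 : |(n:ℝ) + u| ≤ (n:ℝ) + |u| := by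
    calc |(n:ℝ) + u| ≤ |(n:ℝ)| + |u| := abs_add_le _ _
    _ = (n:ℝ) + |u| := by rw [abs_of_nonneg (Nat.cast_nonneg n)]
  have e2 : (n:ℝ) - |v| ≤ |(n:ℝ) + v| := by
    have : (n:ℝ) - |v| ≤ (n:ℝ) + v := by have := neg_abs_le v; linarith
    exact this.trans (le_abs_self _)
  calc |(n:ℝ) + u| ≤ (n:ℝ) + |u| := e1
  _ ≤ q * ((n:ℝ) - |v|) := by nlinarith
  _ ≤ q * |(n:ℝ) + v| := by nlinarith [e2]

/-- ratio bound property: the coefficients grow slower than any geometric q > 1 -/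
def RB (c : ℕ → ℝ) : Prop := ∀ q : ℝ, 1 < q → ∀ᶠ n : ℕ in atTop, |c (n+1)| ≤ q * |c n|

lemma RB.shift {c : ℕ → ℝ} (h : RB c) : RB (fun n => ((n:ℝ)+1) * c (n+1)) := by
  intro q hq
  have hq' : 1 < Real.sqrt q := by
    rw [show (1:ℝ) = Real.sqrt 1 by simp]
    exact Real.sqrt_lt_sqrt (by norm_num) hq
  have hs : Real.sqrt q * Real.sqrt q = q := Real.mul_self_sqrt (by linarith)
  have e1 := h (Real.sqrt q) hq'
  have e2 := lin_ratio 2 1 (Real.sqrt q) hq'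
  rw [eventually_atTop] at e1 e2 ⊢
  obtain ⟨N1, h1⟩ := e1
  obtain ⟨N2, h2⟩ := e2
  refine ⟨max N1 N2, fun n hn => ?_⟩
  have hn1 : N1 ≤ n + 1 := le_trans (le_max_left _ _) (hn.trans (Nat.le_succ n))
  have hn2 : N2 ≤ n := le_trans (le_max_right _ _) hn
  have b1 := h1 (n+1) hn1
  have b2 := h2 n hn2
  have hpos : (0:ℝ) < Real.sqrt q := by linarith
  have hna : |(n:ℝ)+2| = (n:ℝ)+2 := abs_of_nonneg (by positivity)
  have hnb : |(n:ℝ)+1| = (n:ℝ)+1 := abs_of_nonneg (by positivity)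
  rw [hna, hnb] at b2
  simp only [Nat.cast_add, Nat.cast_one]
  have : |((n:ℝ)+1+1) * c (n+1+1)| = ((n:ℝ)+2) * |c (n+2)| := by
    rw [abs_mul, abs_of_nonneg (show (0:ℝ) ≤ (n:ℝ)+1+1 by positivity)]; ring_nf
  calc |((n:ℝ)+1+1) * c (n+1+1)| = ((n:ℝ)+2) * |c (n+2)| := this
  _ ≤ ((n:ℝ)+2) * (Real.sqrt q * |c (n+1)|) := by
      apply mul_le_mul_of_nonneg_left b1 (by positivity)
  _ ≤ (Real.sqrt q * ((n:ℝ)+1)) * (Real.sqrt q * |c (n+1)|) := by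
      apply mul_le_mul_of_nonneg_right _ (by positivity)
      linarith [b2]
  _ = (Real.sqrt q * Real.sqrt q) * |((n:ℝ)+1) * c (n+1)| := by
      rw [abs_mul, hnb]; ring
  _ = q * |((n:ℝ)+1) * c (n+1)| := by rw [hs]

/-- summability of |c n| |x|^n for |x| < 1 given ratio bound -/
lemma RB.summable {c : ℕ → ℝ} (h : RB c) {x : ℝ} (hx : |x| < 1) :
    Summable (fun n => |c n * x ^ n|) := by
  rcases eq_or_ne x 0 with rfl | hx0
  · apply summable_of_ne_finset_zero (s := {0})
    intro n hn
    simp only [Finset.mem_singleton] at hn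
    rw [zero_pow hn, mul_zero, abs_zero]
  · have hxpos : 0 < |x| := abs_pos.mpr hx0
    set ρ : ℝ := (1 + |x|)/2 with hρ
    have hρ1 : ρ < 1 := by rw [hρ]; linarith
    have hρx : |x| < ρ := by rw [hρ]; linarith
    have hq : 1 < ρ / |x| := (one_lt_div hxpos).mpr hρx
    apply summable_of_ratio_norm_eventually_le hρ1
    filter_upwards [h (ρ/|x|) hq] with n hn
    have : |c (n+1) * x^(n+1)| = |c (n+1)| * |x|^(n+1) := by
      rw [abs_mul, abs_pow]
    rw [Real.norm_eq_abs, Real.norm_eq_abs, abs_abs, abs_abs, this, abs_mul, abs_pow]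
    calc |c (n+1)| * |x|^(n+1) ≤ (ρ/|x|) * |c n| * |x|^(n+1) := by
          apply mul_le_mul_of_nonneg_right hn (by positivity)
    _ = ρ * (|c n| * |x|^n) := by
          rw [pow_succ]; field_simp

lemma RB.summable' {c : ℕ → ℝ} (h : RB c) {x : ℝ} (hx : |x| < 1) :
    Summable (fun n => c n * x ^ n) :=
  Summable.of_abs (h.summable hx)

lemma shift_summable {d : ℕ → ℝ} {x : ℝ} (hd : Summable fun n => d n * x^n) :
    Summable (fun n => sh d n * x^n) := by
  apply (summable_nat_add_iff 1).mp
  exact ((hd.mul_left x).congr (fun m => by simp [sh, pow_succ]; ring))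

lemma shift_tsum {d : ℕ → ℝ} {x : ℝ} (hd : Summable fun n => d n * x^n) :
    ∑' n, sh d n * x^n = x * ∑' n, d n * x^n := by
  rw [Summable.tsum_eq_zero_add (shift_summable hd)]
  simp only [sh, zero_mul, zero_add]
  rw [← tsum_mul_left]
  apply tsum_congr
  intro m
  rw [pow_succ]
  ring

lemma hasDerivAt_series {c : ℕ → ℝ} (h : RB c) {x : ℝ} (hx : |x| < 1) :
    HasDerivAt (fun z => ∑' n, c n * z ^ n)
      (∑' n : ℕ, ((n:ℝ)+1) * c (n+1) * x ^ n) x := by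
  set c' : ℕ → ℝ := fun n => ((n:ℝ)+1) * c (n+1) with hc'
  have hRB' : RB c' := h.shift
  set r : ℝ := (1 + |x|)/2 with hr
  have hr0 : 0 < r := by rw [hr]; positivity
  have hr1 : r < 1 := by rw [hr]; linarith
  have hxr : |x| < r := by rw [hr]; linarith
  have hrabs : |r| < 1 := by rw [abs_of_pos hr0]; exact hr1
  set u : ℕ → ℝ := fun n => match n with | 0 => 0 | (m+1) => |c' m * r^m| with hu
  have hu_sum : Summable u := by
    apply (summable_nat_add_iff 1).mp
    exact (hRB'.summable hrabs).congr (fun m => rfl)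
  have hmem : x ∈ Metric.ball (0:ℝ) r := by
    rw [Metric.mem_ball, Real.dist_eq, sub_zero]; exact hxr
  have h0mem : (0:ℝ) ∈ Metric.ball (0:ℝ) r := by
    rw [Metric.mem_ball, Real.dist_eq, sub_zero, abs_zero]; exact hr0
  have key := hasDerivAt_tsum_of_isPreconnected hu_sum Metric.isOpen_ball
    (convex_ball (0:ℝ) r).isPreconnected
    (g := fun n z => c n * z ^ n) (g' := fun n y => c n * ((n:ℝ) * y^(n-1)))
    (fun n y _ => (hasDerivAt_pow n y).const_mul (c n))
    (fun n y hy => ?_) h0mem (h.summable' (x := (0:ℝ)) (by norm_num)) hmem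
  · have hsum_d : Summable (fun n => c n * ((n:ℝ) * x^(n-1))) := by
      apply (summable_nat_add_iff 1).mp
      apply (hRB'.summable' hx).congr
      intro m
      show c' m * x ^ m = c (m+1) * (((m+1:ℕ):ℝ) * x^(m+1-1))
      rw [Nat.add_sub_cancel, hc']
      push_cast
      ring
    have : ∑' n, c n * ((n:ℝ) * x^(n-1)) = ∑' n, c' n * x^n := by
      rw [Summable.tsum_eq_zero_add hsum_d]
      simp only [Nat.cast_zero, zero_mul, mul_zero, zero_add]
      apply tsum_congr
      intro m
      show c (m+1) * (((m+1:ℕ):ℝ) * x^(m+1-1)) = c' m * x ^ m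
      rw [Nat.add_sub_cancel, hc']
      push_cast
      ring
    rw [← this]
    exact key
  · have hy' : |y| ≤ r := by
      rw [Metric.mem_ball, Real.dist_eq, sub_zero] at hy
      exact hy.le
    match n with
    | 0 => simp [u]
    | (m+1) =>
      show ‖c (m+1) * (((m+1:ℕ):ℝ) * y^m)‖ ≤ |c' m * r^m|
      rw [Real.norm_eq_abs, abs_mul, abs_mul, abs_pow, abs_mul, abs_pow]
      have h1 : |y|^m ≤ r^m := pow_le_pow_left₀ (abs_nonneg y) hy' m
      have h2 : |r| = r := abs_of_pos hr0
      rw [h2]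
      have h3 : |((m+1:ℕ):ℝ)| = (m:ℝ)+1 := by
        rw [abs_of_nonneg (by positivity)]; push_cast; ring
      have h4 : |c' m| = ((m:ℝ)+1) * |c (m+1)| := by
        rw [hc', abs_mul, abs_of_nonneg (show (0:ℝ) ≤ (m:ℝ)+1 by positivity)]
      rw [h3, h4]
      calc |c (m+1)| * (((m:ℝ)+1) * |y|^m) ≤ |c (m+1)| * (((m:ℝ)+1) * r^m) := by
            apply mul_le_mul_of_nonneg_left _ (abs_nonneg _)
            exact mul_le_mul_of_nonneg_left h1 (by positivity)
      _ = ((m:ℝ)+1) * |c (m+1)| * r^m := by ring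

section
variable {a b : ℝ} (hb : ∀ k : ℕ, 2 * b - 1 + (k : ℝ) ≠ 0)
include hb

lemma hb2 : (2:ℝ) * b - 1 ≠ 0 := by simpa using hb 0

lemma hden (n : ℕ) : (n:ℝ) + 2*b - 1 ≠ 0 := by
  have := hb n; intro h; apply this; linarith

lemma hbm (m : ℕ) : b - 1/2 + (m:ℝ) ≠ 0 := by
  have := hb (2*m); intro h; apply this; push_cast; linarith

lemma hbm' (m : ℕ) : b + 1/2 + (m:ℝ) ≠ 0 := by
  have := hb (2*m+2); intro h; apply this; push_cast; linarith

lemma hQ (m : ℕ) : poch (b - 1/2) m ≠ 0 := poch_ne_zero (fun k => hbm hb k) m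

lemma hQ' (m : ℕ) : poch (b + 1/2) m ≠ 0 := poch_ne_zero (fun k => hbm' hb k) m

lemma cc_closed (m : ℕ) :
    cc a b (2*m) = poch a m * poch (a-b+3/2) m / (poch (b-1/2) m * (m ! : ℝ)) ∧
    cc a b (2*m+1) = poch a (m+1) * poch (a-b+3/2) m / (poch (b-1/2) (m+1) * (m ! : ℝ)) := by
  induction m with
  | zero =>
    refine ⟨by simp [cc, poch_zero], ?_⟩
    show rr a b 0 * cc a b 0 = _
    have h2b := hb2 hb
    have hb0 : b - (1:ℝ)/2 ≠ 0 := by have := hb 0; intro h; apply this; push_cast; linarith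
    simp only [cc, rr, if_pos (Even.zero), poch_succ, poch_zero]
    push_cast
    rw [Nat.factorial_zero]
    push_cast
    rw [div_mul_eq_mul_div, div_eq_div_iff (fun h => h2b (by linarith)) (fun h => hb0 (by linarith))]
    ring
  | succ m ih =>
    obtain ⟨ihE, ihO⟩ := ih
    have hfm : ((m ! : ℕ) : ℝ) ≠ 0 := by positivity
    have hm1 : ((m:ℝ) + 1) ≠ 0 := by positivity
    have hQm := hQ hb m
    have hQm1 := hQ hb (m+1)
    have hbmm := hbm hb m
    have hbmm1 := hbm hb (m+1)
    have hE : cc a b (2*(m+1)) = poch a (m+1) * poch (a-b+3/2) (m+1) /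
        (poch (b-1/2) (m+1) * (((m+1)! : ℕ) : ℝ)) := by
      have h21 : 2*(m+1) = (2*m+1) + 1 := by ring
      rw [h21]
      show rr a b (2*m+1) * cc a b (2*m+1) = _
      rw [ihO, rr_odd a b (2*m+1) (by omega), poch_succ (a-b+3/2), Nat.factorial_succ]
      push_cast
      field_simp
      ring
    refine ⟨hE, ?_⟩
    show rr a b (2*(m+1)) * cc a b (2*(m+1)) = _
    rw [hE, rr_even a b (2*(m+1)) (by omega), poch_succ a (m+1), poch_succ (b-1/2) (m+1)]
    push_cast
    field_simp
    ring

lemma Gzero (n : ℕ) :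
    sh (c2 a b) n + (2*b-1) * c1 a b n - sh (sh (sh (c2 a b))) n - 2 * sh (c1 a b) n
      - (4*a-2*b+3) * sh (sh (c1 a b)) n - 2*a * cc a b n - (4*a*(a-b+1)) * sh (cc a b) n
      = 0 := by
  have h2b := hb2 hb
  have h0 : (0:ℝ) + 2*b - 1 ≠ 0 := by rw [zero_add]; exact h2b
  match n with
  | 0 =>
    simp only [sh, c1, cc_succ, cc]
    rw [rr_even a b 0 (by omega)]
    push_cast
    field_simp
    ring
  | 1 =>
    simp only [sh, c1, c2, cc_succ, cc]
    rw [rr_even a b 0 (by omega), rr_odd a b 1 (by omega)]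
    push_cast
    field_simp
    ring
  | 2 =>
    have d2 : ((2:ℕ):ℝ) + 2*b - 1 ≠ 0 := hden hb 2
    push_cast at d2
    have d2' : (2:ℝ) * (1 + b) - 1 ≠ 0 := by intro h; apply d2; linarith
    simp only [sh, c1, c2, cc_succ, cc]
    rw [rr_even a b 0 (by omega), rr_odd a b 1 (by omega), rr_even a b 2 (by omega)]
    push_cast
    field_simp
    ring
  | (m+3) =>
    have hm2 : ((m+2:ℕ):ℝ) + 2*b - 1 ≠ 0 := hden hb (m+2)
    have hm3 : ((m+3:ℕ):ℝ) + 2*b - 1 ≠ 0 := hden hb (m+3)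
    push_cast at hm2 hm3
    simp only [sh, c1, c2]
    have h43 : m + 3 + 1 = m + 4 := rfl
    have h32 : m + 2 + 1 = m + 3 := rfl
    rw [h43, h32, cc_succ a b (m+3), cc_succ a b (m+2)]
    rcases Nat.even_or_odd m with hm | hm
    · have hm' := Nat.even_iff.mp hm
      rw [rr_even a b (m+2) (by omega), rr_odd a b (m+3) (by omega)]
      push_cast
      field_simp
      ring
    · have hm' := Nat.odd_iff.mp hm
      rw [rr_odd a b (m+2) (by omega), rr_even a b (m+3) (by omega)]
      push_cast
      field_simp
      ring

lemma RB_cc : RB (cc a b) := by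
  intro q hq
  filter_upwards [lin_ratio (2*a) (2*b-1) q hq, lin_ratio (2*a-2*b+2) 1 q hq] with n h1 h2
  have habs : |cc a b (n+1)| = |rr a b n| * |cc a b n| := by rw [cc_succ, abs_mul]
  rw [habs]
  have hrr : |rr a b n| ≤ q := by
    rw [rr]
    split_ifs with he
    · have hd : ((n:ℝ) + 2*b - 1) ≠ 0 := by
        have := hb n; intro hcon; apply this; linarith
      have hd' : 0 < |(n:ℝ) + 2*b - 1| := abs_pos.mpr hd
      rw [abs_div, div_le_iff₀ hd']
      calc |(n:ℝ) + 2*a| ≤ q * |(n:ℝ) + (2*b-1)| := h1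
      _ = q * |(n:ℝ) + 2*b - 1| := by ring_nf
    · have hd' : 0 < |(n:ℝ) + 1| := by
        rw [abs_of_pos (by positivity)]; positivity
      rw [abs_div, div_le_iff₀ hd']
      calc |(n:ℝ) + 2*a - 2*b + 2| = |(n:ℝ) + (2*a-2*b+2)| := by ring_nf
      _ ≤ q * |(n:ℝ) + 1| := h2
  exact mul_le_mul_of_nonneg_right hrr (abs_nonneg _)

set_option maxHeartbeats 1000000 in
lemma y1_eq {x : ℝ} (hx : |x| < 1) : y₁ a b x = ∑' n : ℕ, cc a b n * x^n := by
  have hsum := (RB_cc (a := a) hb).summable' hx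
  have hE : Summable (fun k : ℕ => cc a b (2*k) * x^(2*k)) := by
    have h2 := hsum.comp_injective (i := fun k : ℕ => 2*k)
      (fun u v h => by simp only at h; omega)
    exact h2
  have hO : Summable (fun k : ℕ => cc a b (2*k+1) * x^(2*k+1)) := by
    have h2 := hsum.comp_injective (i := fun k : ℕ => 2*k+1)
      (fun u v h => by simp only at h; omega)
    exact h2
  rw [← tsum_even_add_odd (f := fun n : ℕ => cc a b n * x^n) hE hO]
  simp only [y₁, F]
  congr 1
  · apply tsum_congr
    intro k
    rw [(cc_closed hb k).1, pow_mul]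
  · rw [← tsum_mul_left]
    apply tsum_congr
    intro k
    rw [(cc_closed hb k).2, poch_succ_left a, poch_succ_left (b-1/2),
      show b - 1/2 + 1 = b + 1/2 by ring,
      show x^(2*k+1) = (x^2)^k * x by rw [pow_succ, pow_mul]]
    have h2b := hb2 hb
    have hb0 : b - (1:ℝ)/2 ≠ 0 := fun h => h2b (by linarith)
    have hQk := hQ' hb k
    have hfk : ((k ! : ℕ):ℝ) ≠ 0 := by positivity
    field_simp

end
end Y1Aux

open Y1Aux in
theorem y1_solves_second_ode (a b : ℝ) (hb : ∀ k : ℕ, 2 * b - 1 + (k : ℝ) ≠ 0) :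
    ∀ x : ℝ, |x| < 1 →
      x * (1 - x ^ 2) * deriv (deriv (y₁ a b)) x
        + (2 * b - 1 - 2 * x - (4 * a - 2 * b + 3) * x ^ 2) * deriv (y₁ a b) x
        - 2 * a * (1 + 2 * (a - b + 1) * x) * y₁ a b x = 0 := by
  intro x hx
  have R0 : RB (cc a b) := RB_cc (a := a) hb
  have R1 : RB (c1 a b) := R0.shift
  have R2 : RB (c2 a b) := R1.shift
  have hmem : ∀ y : ℝ, y ∈ Metric.ball (0:ℝ) 1 → |y| < 1 := by
    intro y hy
    rwa [Metric.mem_ball, Real.dist_eq, sub_zero] at hy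
  have hball : Metric.ball (0:ℝ) 1 ∈ nhds x :=
    Metric.isOpen_ball.mem_nhds (by rw [Metric.mem_ball, Real.dist_eq, sub_zero]; exact hx)
  have hd1 : ∀ y : ℝ, |y| < 1 →
      HasDerivAt (fun z => ∑' n : ℕ, cc a b n * z^n) (∑' n : ℕ, c1 a b n * y^n) y :=
    fun y hy => hasDerivAt_series R0 hy
  have hd2 : ∀ y : ℝ, |y| < 1 →
      HasDerivAt (fun z => ∑' n : ℕ, c1 a b n * z^n) (∑' n : ℕ, c2 a b n * y^n) y :=
    fun y hy => hasDerivAt_series R1 hy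
  -- identify y₁ and derivatives with series
  have e_y : y₁ a b x = ∑' n : ℕ, cc a b n * x^n := y1_eq hb hx
  have hyf : ∀ y : ℝ, |y| < 1 → deriv (y₁ a b) y = ∑' n : ℕ, c1 a b n * y^n := by
    intro y hy
    have hballY : Metric.ball (0:ℝ) 1 ∈ nhds y :=
      Metric.isOpen_ball.mem_nhds (by rw [Metric.mem_ball, Real.dist_eq, sub_zero]; exact hy)
    have heq : y₁ a b =ᶠ[nhds y] (fun z => ∑' n : ℕ, cc a b n * z^n) :=
      Filter.eventually_of_mem hballY (fun z hz => y1_eq hb (hmem z hz))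
    rw [heq.deriv_eq, (hd1 y hy).deriv]
  have e_d1 : deriv (y₁ a b) x = ∑' n : ℕ, c1 a b n * x^n := hyf x hx
  have e_d2 : deriv (deriv (y₁ a b)) x = ∑' n : ℕ, c2 a b n * x^n := by
    have heq : deriv (y₁ a b) =ᶠ[nhds x] (fun z => ∑' n : ℕ, c1 a b n * z^n) :=
      Filter.eventually_of_mem hball (fun z hz => hyf z (hmem z hz))
    rw [heq.deriv_eq, (hd2 x hx).deriv]
  rw [e_y, e_d1, e_d2]
  -- summability of all coefficient series
  have s0 := R0.summable' hx
  have s1 := R1.summable' hx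
  have s2 := R2.summable' hx
  have s2a := shift_summable s2
  have s2b := shift_summable s2a
  have s2c := shift_summable s2b
  have s1a := shift_summable s1
  have s1b := shift_summable s1a
  have s0a := shift_summable s0
  have T2a : ∑' n : ℕ, sh (c2 a b) n * x^n = x * ∑' n : ℕ, c2 a b n * x^n := shift_tsum s2
  have T2b : ∑' n : ℕ, sh (sh (c2 a b)) n * x^n = x * ∑' n : ℕ, sh (c2 a b) n * x^n :=
    shift_tsum s2a
  have T2c : ∑' n : ℕ, sh (sh (sh (c2 a b))) n * x^n
      = x * ∑' n : ℕ, sh (sh (c2 a b)) n * x^n := shift_tsum s2b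
  have T1a : ∑' n : ℕ, sh (c1 a b) n * x^n = x * ∑' n : ℕ, c1 a b n * x^n := shift_tsum s1
  have T1b : ∑' n : ℕ, sh (sh (c1 a b)) n * x^n = x * ∑' n : ℕ, sh (c1 a b) n * x^n :=
    shift_tsum s1a
  have T0a : ∑' n : ℕ, sh (cc a b) n * x^n = x * ∑' n : ℕ, cc a b n * x^n := shift_tsum s0
  -- the combined coefficient vanishes identically
  have K : ∑' n : ℕ, ((sh (c2 a b) n * x^n + (2*b-1) * (c1 a b n * x^n))
        - sh (sh (sh (c2 a b))) n * x^n - 2 * (sh (c1 a b) n * x^n)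
        - (4*a-2*b+3) * (sh (sh (c1 a b)) n * x^n) - 2*a * (cc a b n * x^n)
        - (4*a*(a-b+1)) * (sh (cc a b) n * x^n)) = 0 := by
    have hzero : ∀ n : ℕ, (sh (c2 a b) n * x^n + (2*b-1) * (c1 a b n * x^n))
        - sh (sh (sh (c2 a b))) n * x^n - 2 * (sh (c1 a b) n * x^n)
        - (4*a-2*b+3) * (sh (sh (c1 a b)) n * x^n) - 2*a * (cc a b n * x^n)
        - (4*a*(a-b+1)) * (sh (cc a b) n * x^n) = 0 := by
      intro n
      have := Gzero (a := a) hb n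
      have expand : (sh (c2 a b) n * x^n + (2*b-1) * (c1 a b n * x^n))
        - sh (sh (sh (c2 a b))) n * x^n - 2 * (sh (c1 a b) n * x^n)
        - (4*a-2*b+3) * (sh (sh (c1 a b)) n * x^n) - 2*a * (cc a b n * x^n)
        - (4*a*(a-b+1)) * (sh (cc a b) n * x^n)
        = (sh (c2 a b) n + (2*b-1) * c1 a b n - sh (sh (sh (c2 a b))) n - 2 * sh (c1 a b) n
          - (4*a-2*b+3) * sh (sh (c1 a b)) n - 2*a * cc a b n
          - (4*a*(a-b+1)) * sh (cc a b) n) * x^n := by ring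
      rw [expand, this, zero_mul]
    calc ∑' n : ℕ, _ = ∑' _ : ℕ, (0:ℝ) := tsum_congr hzero
    _ = 0 := tsum_zero
  -- split the tsum
  rw [Summable.tsum_sub (((((s2a.add (s1.mul_left (2*b-1))).sub s2c).sub (s1a.mul_left 2)).sub
        (s1b.mul_left (4*a-2*b+3))).sub (s0.mul_left (2*a))) (s0a.mul_left (4*a*(a-b+1))),
      Summable.tsum_sub ((((s2a.add (s1.mul_left (2*b-1))).sub s2c).sub (s1a.mul_left 2)).sub
        (s1b.mul_left (4*a-2*b+3))) (s0.mul_left (2*a)),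
      Summable.tsum_sub (((s2a.add (s1.mul_left (2*b-1))).sub s2c).sub (s1a.mul_left 2))
        (s1b.mul_left (4*a-2*b+3)),
      Summable.tsum_sub ((s2a.add (s1.mul_left (2*b-1))).sub s2c) (s1a.mul_left 2),
      Summable.tsum_sub (s2a.add (s1.mul_left (2*b-1))) s2c,
      Summable.tsum_add s2a (s1.mul_left (2*b-1)),
      tsum_mul_left, tsum_mul_left, tsum_mul_left, tsum_mul_left, tsum_mul_left] at K
  rw [T2c, T2b, T2a, T1b, T1a, T0a] at K
  linear_combination K
end
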